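/- Let X be a compact metric space, f : X → X continuous, and φ : X → ℝ continuous. Suppose for every x ∈ X, liminf_{n→∞} (1/n) Σ_{j=0}^{n-1} φ(f^j x) < 0. Then there exist a constant c > 0 and an integer N̄ ≥ 1 such that for every x ∈ X there is N₁(x) ∈ {1,…,N̄} with Σ_{j=0}^{N₁(x)-1} φ(f^j x) < -(c/2) N₁(x). -/

import Mathlib

open Filter Finset

theorem stmt_3 {X : Type*} [MetricSpace X] [CompactSpace X]
    (f : X → X) (hf : Continuous f) (φ : X → ℝ) (hφ : Continuous φ)
    (h : ∀ x : X, liminf (fun n : ℕ => (1 / (n : ℝ)) * ∑ j ∈ range n, φ (f^[j] x)) atTop < 0) :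
    ∃ c : ℝ, 0 < c ∧ ∃ Nbar : ℕ, 1 ≤ Nbar ∧ ∀ x : X, ∃ N₁ : ℕ, 1 ≤ N₁ ∧ N₁ ≤ Nbar ∧
      ∑ j ∈ range N₁, φ (f^[j] x) < -(c / 2) * N₁ := by
  rcases isEmpty_or_nonempty X with hX | hX
  · exact ⟨1, one_pos, 1, le_refl 1, fun x => (IsEmpty.false x).elim⟩
  -- φ is bounded
  obtain ⟨M, hM⟩ := isCompact_univ.exists_bound_of_continuousOn (hφ.continuousOn (s := Set.univ))
  have hM0 : 0 ≤ M := le_trans (norm_nonneg _) (hM (Classical.arbitrary X) (Set.mem_univ _))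
  -- for each x there is n ≥ 1 with negative Birkhoff sum
  have key : ∀ x : X, ∃ n : ℕ, 1 ≤ n ∧ ∑ j ∈ range n, φ (f^[j] x) < 0 := by
    intro x
    obtain ⟨b, hb1, hb2⟩ := exists_between (h x)
    have hbdd : IsCoboundedUnder (· ≥ ·) atTop
        (fun n : ℕ => (1 / (n : ℝ)) * ∑ j ∈ range n, φ (f^[j] x)) := by
      refine isCoboundedUnder_ge_of_eventually_le (x := M) atTop
        (Filter.Eventually.of_forall fun (n : ℕ) => ?_)
      have hS : ∑ j ∈ range n, φ (f^[j] x) ≤ (n : ℝ) * M := by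
        have h1 : |∑ j ∈ range n, φ (f^[j] x)| ≤ ∑ j ∈ range n, |φ (f^[j] x)| :=
          Finset.abs_sum_le_sum_abs _ _
        have h2 : ∑ j ∈ range n, |φ (f^[j] x)| ≤ ∑ j ∈ range n, M :=
          Finset.sum_le_sum fun j _ => hM (f^[j] x) (Set.mem_univ _)
        have h3 : ∑ j ∈ range n, M = (n : ℝ) * M := by
          simp [Finset.sum_const, mul_comm]
        nlinarith [le_abs_self (∑ j ∈ range n, φ (f^[j] x))]
      rcases Nat.eq_zero_or_pos n with hn | hn
      · simp [hn, hM0]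
      · have hnpos : (0 : ℝ) < n := by exact_mod_cast hn
        have := mul_le_mul_of_nonneg_left hS (le_of_lt (one_div_pos.mpr hnpos))
        have heq : (1 / (n : ℝ)) * ((n : ℝ) * M) = M := by field_simp
        calc (1 / (n : ℝ)) * ∑ j ∈ range n, φ (f^[j] x) ≤ (1 / (n : ℝ)) * ((n : ℝ) * M) := this
          _ = M := heq
    have hfreq := frequently_lt_of_liminf_lt hbdd hb1
    obtain ⟨n, hn1, hn2⟩ := (hfreq.and_eventually (eventually_ge_atTop 1)).exists
    refine ⟨n, hn2, ?_⟩
    have hnpos : (0 : ℝ) < n := by exact_mod_cast hn2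
    by_contra hc
    push_neg at hc
    have := mul_nonneg (le_of_lt (one_div_pos.mpr hnpos)) hc
    linarith
  choose n hn1 hnS using key
  -- open cover
  set S : ℕ → X → ℝ := fun m y => ∑ j ∈ range m, φ (f^[j] y) with hSdef
  have hScont : ∀ m, Continuous (S m) := fun m =>
    continuous_finset_sum _ fun j _ => hφ.comp (hf.iterate j)
  set U : X → Set X := fun x => {y | S (n x) y < S (n x) x / 2} with hUdef
  have hUopen : ∀ x, IsOpen (U x) := fun x =>
    isOpen_lt (hScont (n x)) continuous_const
  have hUmem : ∀ x, x ∈ U x := fun x => by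
    have := hnS x
    simp only [hUdef, Set.mem_setOf_eq]
    linarith
  have hcover : (Set.univ : Set X) ⊆ ⋃ x, U x := fun y _ =>
    Set.mem_iUnion.mpr ⟨y, hUmem y⟩
  obtain ⟨t, ht⟩ := isCompact_univ.elim_finite_subcover U hUopen hcover
  have htne : t.Nonempty := by
    obtain ⟨x, hx, _⟩ := Set.mem_iUnion₂.mp (ht (Set.mem_univ (Classical.arbitrary X)))
    exact ⟨x, hx⟩
  refine ⟨t.inf' htne (fun x => -(S (n x) x) / (2 * n x)), ?_, t.sup n, ?_, ?_⟩
  · rw [Finset.lt_inf'_iff]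
    intro x _
    have h1 : (0 : ℝ) < n x := by exact_mod_cast hn1 x
    exact div_pos (by linarith [hnS x]) (by linarith)
  · obtain ⟨x, hx⟩ := htne
    exact le_trans (hn1 x) (Finset.le_sup hx)
  · intro y
    obtain ⟨x, hx, hyx⟩ := Set.mem_iUnion₂.mp (ht (Set.mem_univ y))
    refine ⟨n x, hn1 x, Finset.le_sup hx, ?_⟩
    have hcle : t.inf' htne (fun x => -(S (n x) x) / (2 * n x)) ≤ -(S (n x) x) / (2 * n x) :=
      Finset.inf'_le _ hx
    have hcpos : 0 < t.inf' htne (fun x => -(S (n x) x) / (2 * n x)) := by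
      rw [Finset.lt_inf'_iff]
      intro z _
      have h1 : (0 : ℝ) < n z := by exact_mod_cast hn1 z
      exact div_pos (by linarith [hnS z]) (by linarith)
    set c := t.inf' htne (fun x => -(S (n x) x) / (2 * n x))
    have hnx : (1 : ℝ) ≤ n x := by exact_mod_cast hn1 x
    have h2 : c * (2 * n x) ≤ -(S (n x) x) :=
      (le_div_iff₀ (by linarith)).mp hcle
    have hy : S (n x) y < S (n x) x / 2 := hyx
    show S (n x) y < -(c / 2) * n x
    nlinarith
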